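/- Let G = (V,E) be a k-sparse locally finite graph and q : V → [0,∞). Then for every ε with 0 < ε ≤ 1 and every finitely supported f : V → ℂ one has (1−ε)(Q_deg(f) + Q_q(f)) − (k/2)(1/ε − ε)·‖f‖² ≤ Q_Δ(f) + Q_q(f) ≤ (1+ε)(Q_deg(f) + Q_q(f)) + (k/2)(1/ε − ε)·‖f‖². -/

import Mathlib

open scoped BigOperators

noncomputable section

variable {V : Type*} [DecidableEq V] (G : SimpleGraph V) [DecidableRel G.Adj]

/-- The squared `ℓ²`-norm `‖f‖² = ∑_x |f x|²` of a (finitely supported) function. -/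
def qNormSq (f : V → ℂ) : ℝ := ∑' x, ‖f x‖ ^ 2

/-- The quadratic form of the Laplacian:
`Q_Δ(f) = (1/2) ∑_{x ~ y} |f x - f y|²` (sum over ordered pairs of adjacent vertices). -/
def qLap (f : V → ℂ) : ℝ :=
  (1 / 2) * ∑' (x : V), ∑' (y : V), if G.Adj x y then ‖f x - f y‖ ^ 2 else 0

/-- The magnetic quadratic form
`Q_θ(f) = (1/2) ∑_{x ~ y} |f x - e^{iθ(x,y)} f y|²`. -/
def qMag (θ : V → V → ℝ) (f : V → ℂ) : ℝ :=
  (1 / 2) * ∑' (x : V), ∑' (y : V),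
    if G.Adj x y then ‖f x - Complex.exp (Complex.I * (θ x y)) * f y‖ ^ 2 else 0

/-- The quadratic form of a potential: `Q_q(f) = ∑_x q x * |f x|²`. -/
def qPot (q : V → ℝ) (f : V → ℂ) : ℝ := ∑' x, q x * ‖f x‖ ^ 2

variable [G.LocallyFinite]

/-- The quadratic form of the degree: `Q_deg(f) = ∑_x deg x * |f x|²`. -/
def qDeg (f : V → ℂ) : ℝ := ∑' x, (G.degree x : ℝ) * ‖f x‖ ^ 2

/-- Twice the number of undirected edges of the subgraph induced on `W`,
i.e. the number of ordered pairs of adjacent vertices in `W × W`. -/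
def edgesTwice (W : Finset V) : ℕ := ((W ×ˢ W).filter fun p => G.Adj p.1 p.2).card

/-- The cardinality `|∂W|` of the edge boundary of `W`. -/
def bdryCard (W : Finset V) : ℕ :=
  ∑ x ∈ W, ((G.neighborFinset x).filter fun y => y ∉ W).card

/-- `(G, q)` is `(a,k)`-sparse: `2|E_W| ≤ k|W| + a(|∂W| + q₊(W))` for all finite `W`. -/
def IsSparse (q : V → ℝ) (a k : ℝ) : Prop :=
  ∀ W : Finset V,
    (edgesTwice G W : ℝ) ≤ k * W.card + a * ((bdryCard G W : ℝ) + ∑ x ∈ W, max (q x) 0)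

/-- The potential `q` belongs to the class `K_α`:
`Q_{q₋}(f) ≤ α (Q_Δ(f) + Q_{q₊}(f)) + C ‖f‖²` for all finitely supported `f`. -/
def KClass (q : V → ℝ) (α : ℝ) : Prop :=
  ∃ C : ℝ, 0 ≤ C ∧ ∀ f : V → ℂ, (Function.support f).Finite →
    qPot (fun x => max (-q x) 0) f ≤
      α * (qLap G f + qPot (fun x => max (q x) 0) f) + C * qNormSq f

/-- The potential `q` belongs to the magnetic class `K_α^θ`:
`Q_{q₋}(f) ≤ α (Q_θ(f) + Q_{q₊}(f)) + C ‖f‖²` for all finitely supported `f`. -/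
def KClassTheta (θ : V → V → ℝ) (q : V → ℝ) (α : ℝ) : Prop :=
  ∃ C : ℝ, 0 ≤ C ∧ ∀ f : V → ℂ, (Function.support f).Finite →
    qPot (fun x => max (-q x) 0) f ≤
      α * (qMag G θ f + qPot (fun x => max (q x) 0) f) + C * qNormSq f

/-- The Cheeger (isoperimetric) constant of `U ⊆ V`:
the infimum over nonempty finite `W ⊆ U` of `(|∂W| + q(W)) / (deg(W) + q(W))`,
with the convention that the quotient is `0` when the denominator vanishes. -/
def cheeger (q : V → ℝ) (U : Set V) : ℝ :=
  ⨅ W : {W : Finset V // ↑W ⊆ U ∧ W.Nonempty},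
    if (∑ x ∈ W.1, ((G.degree x : ℝ) + q x)) = 0 then 0
    else ((bdryCard G W.1 : ℝ) + ∑ x ∈ W.1, q x) / ∑ x ∈ W.1, ((G.degree x : ℝ) + q x)

/-- The Cheeger constant at infinity: `α_∞ = sup over finite K of α_{V∖K}`. -/
def cheegerInfty (q : V → ℝ) : ℝ :=
  ⨆ K : Finset V, cheeger G q ((↑K : Set V)ᶜ)

/-- for a `k`-sparse graph and `q ≥ 0`, for every `0 < ε ≤ 1` and every
finitely supported `f`,
`(1-ε)(Q_deg(f)+Q_q(f)) - (k/2)(1/ε - ε)‖f‖² ≤ Q_Δ(f)+Q_q(f)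
  ≤ (1+ε)(Q_deg(f)+Q_q(f)) + (k/2)(1/ε - ε)‖f‖²`. -/
private lemma normSubSq (a b : ℂ) :
    ‖a - b‖ ^ 2 = ‖a‖ ^ 2 + ‖b‖ ^ 2 - 2 * (a * (starRingEnd ℂ) b).re := by
  have h : ∀ z : ℂ, ‖z‖ ^ 2 = z.re ^ 2 + z.im ^ 2 := by
    intro z
    rw [Complex.sq_norm, Complex.normSq_apply]; ring
  rw [h, h, h]
  simp only [Complex.sub_re, Complex.sub_im, Complex.mul_re, Complex.mul_im,
    Complex.conj_re, Complex.conj_im]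
  ring

theorem stmt0 [Countable V] (q : V → ℝ) (hq : ∀ x, 0 ≤ q x) (k : ℝ)
    (hsparse : ∀ W : Finset V, (edgesTwice G W : ℝ) ≤ k * W.card)
    (ε : ℝ) (hε0 : 0 < ε) (hε1 : ε ≤ 1)
    (f : V → ℂ) (hf : (Function.support f).Finite) :
    (1 - ε) * (qDeg G f + qPot q f) - k / 2 * (1 / ε - ε) * qNormSq f
        ≤ qLap G f + qPot q f ∧
      qLap G f + qPot q f
        ≤ (1 + ε) * (qDeg G f + qPot q f) + k / 2 * (1 / ε - ε) * qNormSq f := by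
  classical
  set c : ℝ := (1 - ε ^ 2) / (2 * ε) with hc
  have hcnn : 0 ≤ c := by
    apply div_nonneg
    · nlinarith
    · linarith
  set S : Finset V := hf.toFinset with hSdef
  set T : Finset V := S ∪ S.biUnion (fun x => G.neighborFinset x) with hTdef
  have hfT : ∀ x, x ∉ T → f x = 0 := by
    intro x hx
    by_contra h
    exact hx (Finset.mem_union_left _ (hf.mem_toFinset.mpr (Function.mem_support.mpr h)))
  have hnbr : ∀ x, f x ≠ 0 → G.neighborFinset x ⊆ T := by
    intro x hx y hy
    exact Finset.mem_union_right _
      (Finset.mem_biUnion.mpr ⟨x, hf.mem_toFinset.mpr (Function.mem_support.mpr hx), hy⟩)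
  -- the key sparse combinatorial lemma
  have key : ∀ (n : ℕ) (g : V → ℝ), (∀ x, 0 ≤ g x) → (T.filter fun x => g x ≠ 0).card ≤ n →
      (∑ x ∈ T, ∑ y ∈ T, if G.Adj x y then min (g x) (g y) else 0) ≤ k * ∑ x ∈ T, g x := by
    intro n
    induction n with
    | zero =>
      intro g hg hcard
      have hzero : ∀ x ∈ T, g x = 0 := by
        intro x hx
        by_contra h
        have hmem : x ∈ T.filter fun x => g x ≠ 0 := Finset.mem_filter.mpr ⟨hx, h⟩
        rw [Finset.card_eq_zero.mp (Nat.le_zero.mp hcard)] at hmem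
        exact absurd hmem (Finset.notMem_empty x)
      have h1 : ∑ x ∈ T, g x = 0 := Finset.sum_eq_zero hzero
      have h2 : (∑ x ∈ T, ∑ y ∈ T, if G.Adj x y then min (g x) (g y) else 0) = 0 := by
        refine Finset.sum_eq_zero fun x hx => Finset.sum_eq_zero fun y hy => ?_
        by_cases hadj : G.Adj x y
        · simp [hadj, hzero x hx, hzero y hy]
        · simp [hadj]
      rw [h1, h2, mul_zero]
    | succ n ih =>
      intro g hg hcard
      by_cases hW : (T.filter fun x => g x ≠ 0).Nonempty
      · set W := T.filter fun x => g x ≠ 0 with hWdef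
        have hWT : W ⊆ T := Finset.filter_subset _ _
        obtain ⟨x0, hx0W, hx0min⟩ := W.exists_min_image g hW
        set m := g x0 with hmdef
        have hm : 0 < m := lt_of_le_of_ne (hg x0) (Ne.symm (Finset.mem_filter.mp hx0W).2)
        set g' : V → ℝ := fun x => if x ∈ W then g x - m else 0 with hg'def
        have hg'nn : ∀ x, 0 ≤ g' x := by
          intro x
          simp only [hg'def]
          split
          · next hxW => exact sub_nonneg.mpr (hx0min x hxW)
          · exact le_refl 0
        have hfil' : (T.filter fun x => g' x ≠ 0) ⊆ W.erase x0 := by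
          intro x hx
          obtain ⟨hxT, hxne⟩ := Finset.mem_filter.mp hx
          simp only [hg'def] at hxne
          by_cases hxW : x ∈ W
          · rw [if_pos hxW] at hxne
            refine Finset.mem_erase.mpr ⟨?_, hxW⟩
            intro heq
            exact hxne (by rw [heq, hmdef, sub_self])
          · rw [if_neg hxW] at hxne
            exact absurd rfl hxne
        have hcard' : (T.filter fun x => g' x ≠ 0).card ≤ n := by
          have h1 := Finset.card_le_card hfil'
          have h2 : (W.erase x0).card = W.card - 1 := Finset.card_erase_of_mem hx0W
          have h3 : W.card ≤ n + 1 := hcard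
          have h4 : 0 < W.card := Finset.card_pos.mpr hW
          omega
        have IH := ih g' hg'nn hcard'
        have hgdecomp : ∀ x ∈ T, g x = g' x + (if x ∈ W then m else 0) := by
          intro x hxT
          simp only [hg'def]
          by_cases hxW : x ∈ W
          · simp [hxW]
          · have hgx : g x = 0 := by
              by_contra h
              exact hxW (Finset.mem_filter.mpr ⟨hxT, h⟩)
            simp [hxW, hgx]
        have hsum : ∑ x ∈ T, g x = (∑ x ∈ T, g' x) + m * W.card := by
          rw [Finset.sum_congr rfl hgdecomp, Finset.sum_add_distrib]
          congr 1
          rw [Finset.sum_ite_mem, Finset.inter_eq_right.mpr hWT, Finset.sum_const,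
            nsmul_eq_mul, mul_comm]
        have hpt : ∀ x ∈ T, ∀ y ∈ T, (if G.Adj x y then min (g x) (g y) else 0) ≤
            (if G.Adj x y then min (g' x) (g' y) else 0) +
            (if x ∈ W ∧ y ∈ W then (if G.Adj x y then m else 0) else 0) := by
          intro x hxT y hyT
          by_cases hadj : G.Adj x y
          · simp only [if_pos hadj]
            by_cases hxW : x ∈ W
            · by_cases hyW : y ∈ W
              · rw [if_pos ⟨hxW, hyW⟩]
                have hx' : g' x = g x - m := by simp [hg'def, hxW]
                have hy' : g' y = g y - m := by simp [hg'def, hyW]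
                rw [hx', hy', min_sub_sub_right]
                exact le_of_eq (by ring)
              · have hgy : g y = 0 := by
                  by_contra h
                  exact hyW (Finset.mem_filter.mpr ⟨hyT, h⟩)
                rw [if_neg (fun h => hyW h.2), add_zero, hgy, min_eq_right (hg x)]
                exact le_min (hg'nn x) (hg'nn y)
            · have hgx : g x = 0 := by
                by_contra h
                exact hxW (Finset.mem_filter.mpr ⟨hxT, h⟩)
              rw [if_neg (fun h => hxW h.1), add_zero, hgx, min_eq_left (hg y)]
              exact le_min (hg'nn x) (hg'nn y)
          · simp [hadj]
        have hsum1 : (∑ x ∈ T, ∑ y ∈ T, if G.Adj x y then min (g x) (g y) else 0) ≤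
            (∑ x ∈ T, ∑ y ∈ T, if G.Adj x y then min (g' x) (g' y) else 0) +
            (∑ x ∈ T, ∑ y ∈ T, if x ∈ W ∧ y ∈ W then (if G.Adj x y then m else 0) else 0) := by
          calc (∑ x ∈ T, ∑ y ∈ T, if G.Adj x y then min (g x) (g y) else 0)
              ≤ ∑ x ∈ T, ∑ y ∈ T, ((if G.Adj x y then min (g' x) (g' y) else 0) +
                (if x ∈ W ∧ y ∈ W then (if G.Adj x y then m else 0) else 0)) :=
                Finset.sum_le_sum fun x hx => Finset.sum_le_sum fun y hy => hpt x hx y hy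
            _ = _ := by simp only [Finset.sum_add_distrib]
        have hedge : (∑ x ∈ T, ∑ y ∈ T, if x ∈ W ∧ y ∈ W then (if G.Adj x y then m else 0) else 0)
            = m * edgesTwice G W := by
          have step1 : (∑ x ∈ T, ∑ y ∈ T, if x ∈ W ∧ y ∈ W then (if G.Adj x y then m else 0) else 0)
              = ∑ x ∈ W, ∑ y ∈ W, (if G.Adj x y then m else 0) := by
            rw [← Finset.sum_subset hWT
              (fun x _ hxW => Finset.sum_eq_zero fun y _ => if_neg fun h => hxW h.1)]
            refine Finset.sum_congr rfl fun x hxW => ?_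
            rw [← Finset.sum_subset hWT (fun y _ hyW => if_neg fun h => hyW h.2)]
            exact Finset.sum_congr rfl fun y hyW => if_pos ⟨hxW, hyW⟩
          rw [step1, ← Finset.sum_product' (f := fun x y => if G.Adj x y then m else 0)]
          simp only [edgesTwice]
          rw [Finset.sum_ite, Finset.sum_const, Finset.sum_const_zero, add_zero,
            nsmul_eq_mul, mul_comm]
        have h5 : m * (edgesTwice G W : ℝ) ≤ m * (k * W.card) :=
          mul_le_mul_of_nonneg_left (hsparse W) hm.le
        rw [hsum]
        calc (∑ x ∈ T, ∑ y ∈ T, if G.Adj x y then min (g x) (g y) else 0)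
            ≤ (∑ x ∈ T, ∑ y ∈ T, if G.Adj x y then min (g' x) (g' y) else 0)
              + m * edgesTwice G W := by rw [← hedge]; exact hsum1
          _ ≤ k * (∑ x ∈ T, g' x) + m * (k * W.card) := add_le_add IH h5
          _ = k * ((∑ x ∈ T, g' x) + m * W.card) := by ring
      · have h0 : (T.filter fun x => g x ≠ 0).card = 0 := by
          rw [Finset.not_nonempty_iff_eq_empty.mp hW, Finset.card_empty]
        exact ih g hg (h0 ▸ Nat.zero_le n)
  -- reduce tsums to finite sums over T
  have hNormEq : qNormSq f = ∑ x ∈ T, ‖f x‖ ^ 2 :=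
    tsum_eq_sum (fun x hx => by simp [hfT x hx])
  have hPotEq : qPot q f = ∑ x ∈ T, q x * ‖f x‖ ^ 2 :=
    tsum_eq_sum (fun x hx => by simp [hfT x hx])
  have hDegEq : qDeg G f = ∑ x ∈ T, (G.degree x : ℝ) * ‖f x‖ ^ 2 :=
    tsum_eq_sum (fun x hx => by simp [hfT x hx])
  have hLapEq : qLap G f =
      (1 / 2) * ∑ x ∈ T, ∑ y ∈ T, (if G.Adj x y then ‖f x - f y‖ ^ 2 else 0) := by
    rw [qLap]
    congr 1
    have hinner : ∀ x : V, (∑' y, if G.Adj x y then ‖f x - f y‖ ^ 2 else 0)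
        = ∑ y ∈ T, (if G.Adj x y then ‖f x - f y‖ ^ 2 else 0) := by
      intro x
      apply tsum_eq_sum
      intro y hy
      by_cases hadj : G.Adj x y
      · have hfy := hfT y hy
        have hfx : f x = 0 := by
          by_contra h
          exact hy (hnbr x h (by rw [SimpleGraph.mem_neighborFinset]; exact hadj))
        simp [hadj, hfx, hfy]
      · simp [hadj]
    rw [tsum_congr hinner]
    apply tsum_eq_sum
    intro x hx
    refine Finset.sum_eq_zero fun y hy => ?_
    by_cases hadj : G.Adj x y
    · have hfx := hfT x hx
      have hfy : f y = 0 := by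
        by_contra h
        exact hx (hnbr y h (by rw [SimpleGraph.mem_neighborFinset]; exact hadj.symm))
      simp [hadj, hfx, hfy]
    · simp [hadj]
  -- degree identity
  have hdegsum : ∀ x, (∑ y ∈ T, if G.Adj x y then ‖f x‖ ^ 2 else 0)
      = (G.degree x : ℝ) * ‖f x‖ ^ 2 := by
    intro x
    by_cases hfx : f x = 0
    · simp [hfx]
    · have hfil : T.filter (fun y => G.Adj x y) = G.neighborFinset x := by
        ext y
        simp only [Finset.mem_filter, SimpleGraph.mem_neighborFinset]
        exact ⟨fun h => h.2,
          fun h => ⟨hnbr x hfx (by rw [SimpleGraph.mem_neighborFinset]; exact h), h⟩⟩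
      rw [← Finset.sum_filter, hfil, Finset.sum_const, nsmul_eq_mul,
        SimpleGraph.card_neighborFinset_eq_degree]
  have hu : (∑ x ∈ T, ∑ y ∈ T, if G.Adj x y then ‖f x‖ ^ 2 else 0)
      = ∑ x ∈ T, (G.degree x : ℝ) * ‖f x‖ ^ 2 :=
    Finset.sum_congr rfl fun x _ => hdegsum x
  have hv : (∑ x ∈ T, ∑ y ∈ T, if G.Adj x y then ‖f y‖ ^ 2 else 0)
      = ∑ x ∈ T, (G.degree x : ℝ) * ‖f x‖ ^ 2 := by
    rw [Finset.sum_comm]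
    refine Finset.sum_congr rfl fun y _ => ?_
    rw [show (∑ x ∈ T, if G.Adj x y then ‖f y‖ ^ 2 else 0)
        = ∑ x ∈ T, (if G.Adj y x then ‖f y‖ ^ 2 else 0) from
      Finset.sum_congr rfl fun x _ => if_congr (G.adj_comm x y) rfl rfl]
    exact hdegsum y
  set D : ℝ := ∑ x ∈ T, (G.degree x : ℝ) * ‖f x‖ ^ 2 with hD
  set N : ℝ := ∑ x ∈ T, ‖f x‖ ^ 2 with hN
  set P : ℝ := ∑ x ∈ T, q x * ‖f x‖ ^ 2 with hP
  set R : ℝ := ∑ x ∈ T, ∑ y ∈ T,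
    (if G.Adj x y then (f x * (starRingEnd ℂ) (f y)).re else 0) with hR
  set M : ℝ := ∑ x ∈ T, ∑ y ∈ T,
    (if G.Adj x y then min (‖f x‖ ^ 2) (‖f y‖ ^ 2) else 0) with hM
  -- expansion of the Laplacian form
  have hptA : ∀ x y : V, (if G.Adj x y then ‖f x - f y‖ ^ 2 else 0)
      = (if G.Adj x y then ‖f x‖ ^ 2 else 0) + (if G.Adj x y then ‖f y‖ ^ 2 else 0)
        - 2 * (if G.Adj x y then (f x * (starRingEnd ℂ) (f y)).re else 0) := by
    intro x y
    by_cases hadj : G.Adj x y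
    · simp only [if_pos hadj]
      rw [normSubSq]
    · simp [hadj]
  have hA : (∑ x ∈ T, ∑ y ∈ T, if G.Adj x y then ‖f x - f y‖ ^ 2 else 0) = 2 * D - 2 * R := by
    rw [Finset.sum_congr rfl fun x _ => Finset.sum_congr rfl fun y _ => hptA x y]
    simp only [Finset.sum_sub_distrib, Finset.sum_add_distrib, ← Finset.mul_sum]
    rw [hu, hv, ← hR]
    ring
  -- the Cauchy-Schwarz / AM-GM bound
  have hab : ∀ a b : ℝ, 0 ≤ a → 0 ≤ b →
      a * b ≤ ε / 2 * (a ^ 2 + b ^ 2) + c * min (a ^ 2) (b ^ 2) := by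
    have main : ∀ a b : ℝ, 0 ≤ a → a ≤ b →
        a * b ≤ ε / 2 * (a ^ 2 + b ^ 2) + c * a ^ 2 := by
      intro a b ha hab
      have h2 : (0:ℝ) < 2 * ε := by linarith
      have h3 : a * b - ε / 2 * (a ^ 2 + b ^ 2) ≤ (1 - ε ^ 2) * a ^ 2 / (2 * ε) := by
        rw [le_div_iff₀ h2]
        nlinarith [sq_nonneg (a - ε * b)]
      have h4 : c * a ^ 2 = (1 - ε ^ 2) * a ^ 2 / (2 * ε) := by rw [hc]; ring
      linarith
    intro a b ha hb
    rcases le_total a b with h | h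
    · have h2 := main a b ha h
      rwa [min_eq_left (by nlinarith : a ^ 2 ≤ b ^ 2)]
    · have h2 := main b a hb h
      rw [min_eq_right (by nlinarith : b ^ 2 ≤ a ^ 2)]
      calc a * b = b * a := mul_comm a b
        _ ≤ ε / 2 * (b ^ 2 + a ^ 2) + c * b ^ 2 := h2
        _ = ε / 2 * (a ^ 2 + b ^ 2) + c * b ^ 2 := by ring
  have hptR : ∀ x y : V, |if G.Adj x y then (f x * (starRingEnd ℂ) (f y)).re else 0|
      ≤ (if G.Adj x y then ε / 2 * (‖f x‖ ^ 2 + ‖f y‖ ^ 2)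
          + c * min (‖f x‖ ^ 2) (‖f y‖ ^ 2) else 0) := by
    intro x y
    by_cases hadj : G.Adj x y
    · simp only [if_pos hadj]
      refine le_trans (Complex.abs_re_le_norm _) ?_
      rw [norm_mul, Complex.norm_conj]
      exact hab ‖f x‖ ‖f y‖ (norm_nonneg _) (norm_nonneg _)
    · simp [hadj]
  have hRabs : |R| ≤ ε * D + c * M := by
    have h1 : |R| ≤ ∑ x ∈ T, ∑ y ∈ T,
        |if G.Adj x y then (f x * (starRingEnd ℂ) (f y)).re else 0| := by
      rw [hR]
      refine le_trans (Finset.abs_sum_le_sum_abs _ _)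
        (Finset.sum_le_sum fun x _ => Finset.abs_sum_le_sum_abs _ _)
    have h2 : (∑ x ∈ T, ∑ y ∈ T,
          |if G.Adj x y then (f x * (starRingEnd ℂ) (f y)).re else 0|)
        ≤ ∑ x ∈ T, ∑ y ∈ T, (if G.Adj x y then ε / 2 * (‖f x‖ ^ 2 + ‖f y‖ ^ 2)
            + c * min (‖f x‖ ^ 2) (‖f y‖ ^ 2) else 0) :=
      Finset.sum_le_sum fun x _ => Finset.sum_le_sum fun y _ => hptR x y
    have hsplit : ∀ x y : V, (if G.Adj x y then ε / 2 * (‖f x‖ ^ 2 + ‖f y‖ ^ 2)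
          + c * min (‖f x‖ ^ 2) (‖f y‖ ^ 2) else 0)
        = ε / 2 * ((if G.Adj x y then ‖f x‖ ^ 2 else 0) + (if G.Adj x y then ‖f y‖ ^ 2 else 0))
          + c * (if G.Adj x y then min (‖f x‖ ^ 2) (‖f y‖ ^ 2) else 0) := by
      intro x y
      by_cases hadj : G.Adj x y
      · simp only [if_pos hadj]
      · simp [hadj]
    have h3 : (∑ x ∈ T, ∑ y ∈ T, (if G.Adj x y then ε / 2 * (‖f x‖ ^ 2 + ‖f y‖ ^ 2)
          + c * min (‖f x‖ ^ 2) (‖f y‖ ^ 2) else 0)) = ε * D + c * M := by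
      rw [Finset.sum_congr rfl fun x _ => Finset.sum_congr rfl fun y _ => hsplit x y]
      simp only [Finset.sum_add_distrib, ← Finset.mul_sum]
      rw [hu, hv, ← hM]
      ring
    linarith
  have hMk : M ≤ k * N := by
    rw [hM, hN]
    exact key _ (fun x => ‖f x‖ ^ 2) (fun x => by positivity) le_rfl
  have hPnn : (0:ℝ) ≤ P := by
    rw [hP]
    exact Finset.sum_nonneg fun x _ => mul_nonneg (hq x) (by positivity)
  have hkc : k / 2 * (1 / ε - ε) = c * k := by
    rw [hc]; field_simp
  rw [hLapEq, hPotEq, hDegEq, hNormEq, hA, hkc]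
  clear_value c D N P R M
  have hRle := (abs_le.mp hRabs).2
  have hRge := (abs_le.mp hRabs).1
  have hεP : 0 ≤ ε * P := mul_nonneg hε0.le hPnn
  have hcM : c * M ≤ c * (k * N) := mul_le_mul_of_nonneg_left hMk hcnn
  have hexp1 : (1 - ε) * (D + P) = D + P - ε * D - ε * P := by ring
  have hexp2 : (1 + ε) * (D + P) = D + P + ε * D + ε * P := by ring
  have hexp3 : (1:ℝ) / 2 * (2 * D - 2 * R) = D - R := by ring
  have hexp4 : c * k * N = c * (k * N) := by ring
  constructor
  · rw [hexp1, hexp3, hexp4]; linarith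
  · rw [hexp2, hexp3, hexp4]; linarith


end
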